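/- Let D be a (super) edge-magic digraph with a (super) edge-magic labeling f, let h : E(D) → S_p^k be any function, and let f̂ be the induced (super) edge-magic labeling of D ⊗_h S_p^k defined by f̂(a,i) = p(f(a) − 1) + i on vertices and f̂((a,i),(b,j)) = p(f((a,b)) − 1) + (k + p) − (i + j) on arcs. Then val(f̂) = p(val(f) − 3) + k + p. -/

import Mathlib

open Finset

/-- `(fv, fa)` is an edge-magic labeling with valence `k` of the digraph with vertex set
`Vs` and arc set `A` (i.e. of its underlying graph): the labels form a bijection from
`V ∪ E` onto `[1, |V| + |E|]` and every arc `(u,v)` satisfies `fv u + fa (u,v) + fv v = k`. -/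
def DIsEdgeMagic {β : Type*} [DecidableEq β] (Vs : Finset β) (A : Finset (β × β))
    (fv : β → ℤ) (fa : β × β → ℤ) (k : ℤ) : Prop :=
  Vs.image fv ∪ A.image fa = Finset.Icc 1 ((Vs.card : ℤ) + (A.card : ℤ)) ∧
  ∀ a ∈ A, fv a.1 + fa a + fv a.2 = k

/-- A super edge-magic labeling of a digraph: edge-magic and the vertex labels are
exactly `[1, |V|]`. -/
def DIsSuperEdgeMagic {β : Type*} [DecidableEq β] (Vs : Finset β) (A : Finset (β × β))
    (fv : β → ℤ) (fa : β × β → ℤ) (k : ℤ) : Prop :=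
  DIsEdgeMagic Vs A fv fa k ∧ Vs.image fv = Finset.Icc 1 (Vs.card : ℤ)

/-- Membership in the family `S_p^k`: a digraph on the vertex set `[1,p] ⊆ ℤ`
(vertices named after their labels), with exactly `p` arcs, whose induced edge sums
are exactly `{k, k+1, …, k+p-1}`. -/
def memSpk (p : ℕ) (k : ℤ) (F : Finset (ℤ × ℤ)) : Prop :=
  (∀ a ∈ F, a.1 ∈ Finset.Icc (1 : ℤ) (p : ℤ) ∧ a.2 ∈ Finset.Icc (1 : ℤ) (p : ℤ)) ∧
  F.card = p ∧
  F.image (fun a => a.1 + a.2) = Finset.Icc k (k + (p : ℤ) - 1)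

/-- The arc set of the product `D ⊗_h Γ`, where `D` has arc set `A` and `h` assigns to
each arc of `D` a digraph on a vertex set contained in `ℤ`:
`((a,i),(b,j))` is an arc iff `(a,b) ∈ A` and `(i,j) ∈ h (a,b)`. -/
def prodArcs {α : Type*} [DecidableEq α] (A : Finset (α × α))
    (h : α × α → Finset (ℤ × ℤ)) : Finset ((α × ℤ) × (α × ℤ)) :=
  A.biUnion fun ab => (h ab).image fun ij => ((ab.1, ij.1), (ab.2, ij.2))

/-- Isomorphism of digraphs given by vertex sets and arc sets. -/
def DigraphIso {β γ : Type*} [DecidableEq β] [DecidableEq γ]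
    (V1 : Finset β) (A1 : Finset (β × β)) (V2 : Finset γ) (A2 : Finset (γ × γ)) : Prop :=
  ∃ φ : β → γ, Set.InjOn φ ↑V1 ∧ V1.image φ = V2 ∧ A1.image (Prod.map φ φ) = A2

/-- Isomorphism of labeled digraphs: a digraph isomorphism preserving all vertex and
arc labels. -/
def LabeledDigraphIso {β γ : Type*} [DecidableEq β] [DecidableEq γ]
    (V1 : Finset β) (A1 : Finset (β × β)) (fv1 : β → ℤ) (fa1 : β × β → ℤ)
    (V2 : Finset γ) (A2 : Finset (γ × γ)) (fv2 : γ → ℤ) (fa2 : γ × γ → ℤ) : Prop :=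
  ∃ φ : β → γ, Set.InjOn φ ↑V1 ∧ V1.image φ = V2 ∧
    A1.image (Prod.map φ φ) = A2 ∧
    (∀ x ∈ V1, fv2 (φ x) = fv1 x) ∧
    (∀ a ∈ A1, fa2 (φ a.1, φ a.2) = fa1 a)

/-- The vertex labels of the labeling of `D ⊗_h S_p^k` induced by a labeling `gv` of the
vertices of `D`: the vertex `(a,i)` receives `p(gv a - 1) + i`. -/
def inducedVert {α : Type*} (p : ℕ) (gv : α → ℤ) : α × ℤ → ℤ :=
  fun x => (p : ℤ) * (gv x.1 - 1) + x.2

/-- The arc labels of the labeling of `D ⊗_h S_p^k` induced by an arc labeling `ga` of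
`D`: the arc `((a,i),(b,j))` receives `p(ga (a,b) - 1) + (k + p) - (i + j)`. -/
def inducedArc {α : Type*} (p : ℕ) (k : ℤ) (ga : α × α → ℤ) :
    (α × ℤ) × (α × ℤ) → ℤ :=
  fun x => (p : ℤ) * (ga (x.1.1, x.2.1) - 1) + (k + (p : ℤ)) - (x.1.2 + x.2.2)

/-- The labeling of `D ⊗_h S_p^k` induced by a (super) edge-magic labeling `f` of `D`
is (super) edge-magic with valence `p(val(f) - 3) + k + p`. -/

private lemma biUnion_Icc_blocks (p : ℕ) (n : ℤ) :
    (Finset.Icc 1 n).biUnion (fun m => Finset.Icc ((p:ℤ)*(m-1)+1) ((p:ℤ)*m))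
      = Finset.Icc 1 ((p:ℤ)*n) := by
  ext x
  simp only [Finset.mem_biUnion, Finset.mem_Icc]
  constructor
  · rintro ⟨m, ⟨hm1, hm2⟩, hx1, hx2⟩
    have h1 : (0:ℤ) ≤ (p:ℤ) * (m-1) := mul_nonneg (by positivity) (by linarith)
    have h2 : (p:ℤ) * m ≤ (p:ℤ) * n := mul_le_mul_of_nonneg_left hm2 (by positivity)
    constructor <;> linarith
  · rintro ⟨hx1, hx2⟩
    rcases Nat.eq_zero_or_pos p with hp | hp
    · subst hp; simp at hx2; omega
    have hp' : (0:ℤ) < p := by exact_mod_cast hp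
    set q := (x - 1) / (p:ℤ) with hq
    have hdm : (p:ℤ) * q + (x-1) % (p:ℤ) = x - 1 := Int.mul_ediv_add_emod (x-1) p
    have hr1 : 0 ≤ (x-1) % (p:ℤ) := Int.emod_nonneg (x-1) (ne_of_gt hp')
    have hr2 : (x-1) % (p:ℤ) < p := Int.emod_lt_of_pos (x-1) hp'
    have hq0 : 0 ≤ q := Int.ediv_nonneg (by linarith) (le_of_lt hp')
    have hqn : q + 1 ≤ n := by
      by_contra hcon
      push_neg at hcon
      have : (p:ℤ) * n ≤ (p:ℤ) * q := mul_le_mul_of_nonneg_left (by linarith) (le_of_lt hp')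
      linarith
    exact ⟨q + 1, ⟨by linarith, hqn⟩, by linarith, by linarith⟩

theorem stmt6 {α : Type*} [DecidableEq α] (Vs : Finset α) (A : Finset (α × α))
    (hA : ∀ a ∈ A, a.1 ∈ Vs ∧ a.2 ∈ Vs)
    (p : ℕ) (k : ℤ) (h : α × α → Finset (ℤ × ℤ))
    (hh : ∀ a ∈ A, memSpk p k (h a))
    (fv : α → ℤ) (fa : α × α → ℤ) (κ : ℤ)
    (hf : DIsEdgeMagic Vs A fv fa κ) :
    DIsEdgeMagic (Vs ×ˢ Finset.Icc (1 : ℤ) (p : ℤ)) (prodArcs A h)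
      (inducedVert p fv) (inducedArc p k fa)
      ((p : ℤ) * (κ - 3) + k + (p : ℤ)) ∧
    (DIsSuperEdgeMagic Vs A fv fa κ →
      DIsSuperEdgeMagic (Vs ×ˢ Finset.Icc (1 : ℤ) (p : ℤ)) (prodArcs A h)
        (inducedVert p fv) (inducedArc p k fa)
        ((p : ℤ) * (κ - 3) + k + (p : ℤ))) := by
  have hVimg : (Vs ×ˢ Finset.Icc (1:ℤ) (p:ℤ)).image (inducedVert p fv)
      = (Vs.image fv).biUnion (fun m => Finset.Icc ((p:ℤ)*(m-1)+1) ((p:ℤ)*m)) := by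
    ext x
    simp only [Finset.mem_image, Finset.mem_biUnion, Finset.mem_product, Finset.mem_Icc,
      inducedVert]
    constructor
    · rintro ⟨⟨a, i⟩, ⟨ha, hi1, hi2⟩, rfl⟩
      exact ⟨fv a, ⟨a, ha, rfl⟩, by linarith, by linarith⟩
    · rintro ⟨m, ⟨a, ha, rfl⟩, h1, h2⟩
      exact ⟨(a, x - (p:ℤ)*(fv a - 1)), ⟨ha, by simp; linarith, by simp; linarith⟩, by ring⟩
  have hAimg : (prodArcs A h).image (inducedArc p k fa)
      = (A.image fa).biUnion (fun m => Finset.Icc ((p:ℤ)*(m-1)+1) ((p:ℤ)*m)) := by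
    ext x
    simp only [Finset.mem_image, Finset.mem_biUnion, Finset.mem_Icc]
    constructor
    · rintro ⟨y, hy, rfl⟩
      simp only [prodArcs, Finset.mem_biUnion, Finset.mem_image] at hy
      obtain ⟨ab, hab, ij, hij, rfl⟩ := hy
      have hs : ij.1 + ij.2 ∈ Finset.Icc k (k + (p:ℤ) - 1) := by
        rw [← (hh ab hab).2.2]
        exact Finset.mem_image_of_mem _ hij
      rw [Finset.mem_Icc] at hs
      refine ⟨fa ab, ⟨ab, hab, rfl⟩, ?_, ?_⟩ <;>
        simp only [inducedArc, Prod.mk.eta] <;> linarith [hs.1, hs.2]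
    · rintro ⟨m, ⟨ab, hab, rfl⟩, h1, h2⟩
      have hs : (p:ℤ)*(fa ab - 1) + (k + (p:ℤ)) - x ∈ Finset.Icc k (k + (p:ℤ) - 1) := by
        rw [Finset.mem_Icc]; constructor <;> linarith
      rw [← (hh ab hab).2.2, Finset.mem_image] at hs
      obtain ⟨ij, hij, hijsum⟩ := hs
      refine ⟨((ab.1, ij.1), (ab.2, ij.2)), ?_, ?_⟩
      · simp only [prodArcs, Finset.mem_biUnion, Finset.mem_image]
        exact ⟨ab, hab, ij, hij, rfl⟩
      · simp only [inducedArc, Prod.mk.eta]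
        linarith
  have hcardV : ((Vs ×ˢ Finset.Icc (1:ℤ) (p:ℤ)).card : ℤ) = (Vs.card : ℤ) * p := by
    have hp : ((p:ℤ)+1-1).toNat = p := by omega
    rw [Finset.card_product, Int.card_Icc, hp]
    push_cast
    ring
  have hcardA : ((prodArcs A h).card : ℤ) = (A.card : ℤ) * p := by
    rw [prodArcs, Finset.card_biUnion]
    · have : ∀ ab ∈ A, ((h ab).image fun ij : ℤ × ℤ => ((ab.1, ij.1), (ab.2, ij.2))).card = p := by
        intro ab hab
        rw [Finset.card_image_of_injective _ (fun ij ij' hh' => by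
          simpa [Prod.ext_iff] using hh'), (hh ab hab).2.1]
      rw [Finset.sum_congr rfl this, Finset.sum_const, smul_eq_mul]
      push_cast; ring
    · intro ab hab ab' hab' hne
      rw [Function.onFun, Finset.disjoint_left]
      rintro y hy hy'
      simp only [Finset.mem_image] at hy hy'
      obtain ⟨ij, _, rfl⟩ := hy
      obtain ⟨ij', _, heq⟩ := hy'
      obtain ⟨a, b⟩ := ab
      obtain ⟨a', b'⟩ := ab'
      simp_all [Prod.ext_iff]
  have hEM : DIsEdgeMagic (Vs ×ˢ Finset.Icc (1 : ℤ) (p : ℤ)) (prodArcs A h)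
      (inducedVert p fv) (inducedArc p k fa) ((p : ℤ) * (κ - 3) + k + (p : ℤ)) := by
    constructor
    · have hbu : ∀ s t : Finset ℤ, (s ∪ t).biUnion (fun m => Finset.Icc ((p:ℤ)*(m-1)+1) ((p:ℤ)*m))
          = s.biUnion (fun m => Finset.Icc ((p:ℤ)*(m-1)+1) ((p:ℤ)*m))
            ∪ t.biUnion (fun m => Finset.Icc ((p:ℤ)*(m-1)+1) ((p:ℤ)*m)) := by
        intro s t
        ext x
        simp only [Finset.mem_biUnion, Finset.mem_union]
        constructor
        · rintro ⟨m, hm | hm, hx⟩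
          exacts [Or.inl ⟨m, hm, hx⟩, Or.inr ⟨m, hm, hx⟩]
        · rintro (⟨m, hm, hx⟩ | ⟨m, hm, hx⟩)
          exacts [⟨m, Or.inl hm, hx⟩, ⟨m, Or.inr hm, hx⟩]
      rw [hVimg, hAimg, ← hbu, hf.1, biUnion_Icc_blocks, hcardV, hcardA]
      congr 1
      ring
    · intro y hy
      simp only [prodArcs, Finset.mem_biUnion, Finset.mem_image] at hy
      obtain ⟨ab, hab, ij, hij, rfl⟩ := hy
      have hmagic := hf.2 ab hab
      simp only [inducedVert, inducedArc, Prod.mk.eta]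
      have h3 : (p:ℤ)*(fv ab.1 + fa ab + fv ab.2) = (p:ℤ)*κ := by rw [hmagic]
      linarith
  refine ⟨hEM, fun hs => ⟨hEM, ?_⟩⟩
  rw [hVimg, hs.2, biUnion_Icc_blocks, hcardV]
  congr 1
  ring
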